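/- Let w be an A₂ᵈ weight on ℝ whose characteristic [w]_{A₂ᵈ} is sufficiently close to 1. Then there exist ε > 0 and C > 0, independent of w, such that for all dyadic intervals J: (1/|J|) ∑_{I ∈ 𝒟(J)} w_I² c_I² (w⁻¹)_I ≤ C (log [w]_{A₂ᵈ})^ε [w]_{A₂ᵈ} w_J, where c_I = √|I| (w_{I₋} − w_{I₊})/(2w_I). -/

import Mathlib

open MeasureTheory Set Filter
noncomputable section

/-- The dyadic interval of generation `n` and position `k`: `[k·2⁻ⁿ, (k+1)·2⁻ⁿ)`. -/
def dI (n k : ℤ) : Set ℝ := Set.Ico ((k : ℝ) * 2 ^ (-n)) (((k : ℝ) + 1) * 2 ^ (-n))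

/-- The length `2⁻ⁿ` of a dyadic interval of generation `n`. -/
def len (n : ℤ) : ℝ := 2 ^ (-n)

/-- The average of `w` over the dyadic interval of generation `n`, position `k`. -/
def avg (w : ℝ → ℝ) (n k : ℤ) : ℝ := (2 : ℝ) ^ (n : ℤ) * ∫ x in dI n k, w x

/-- Average over the left half. -/
def avgL (w : ℝ → ℝ) (n k : ℤ) : ℝ := avg w (n + 1) (2 * k)

/-- Average over the right half. -/
def avgR (w : ℝ → ℝ) (n k : ℤ) : ℝ := avg w (n + 1) (2 * k + 1)

/-- The coefficient `c_I = √|I| (w_{I₋} − w_{I₊})/(2 w_I)`. -/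
def cI (w : ℝ → ℝ) (n k : ℤ) : ℝ :=
  Real.sqrt (len n) * (avgL w n k - avgR w n k) / (2 * avg w n k)

/-- The pointwise inverse `w⁻¹` of a weight. -/
def inv' (w : ℝ → ℝ) : ℝ → ℝ := fun x => (w x)⁻¹

/-- The dyadic A₂ characteristic `[w]_{A₂ᵈ} = sup_Q (⨍_Q w)(⨍_Q w⁻¹)`. -/
def A2d (w : ℝ → ℝ) : ℝ := ⨆ p : ℤ × ℤ, avg w p.1 p.2 * avg (inv' w) p.1 p.2

/-- The Haar function of the dyadic interval of generation `n`, position `k`. -/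
def haar (n k : ℤ) : ℝ → ℝ := fun x =>
  (Real.sqrt (len n))⁻¹ *
    ((dI (n + 1) (2 * k + 1)).indicator (fun _ => (1 : ℝ)) x -
      (dI (n + 1) (2 * k)).indicator (fun _ => (1 : ℝ)) x)

/-- The measure `w dx`. -/
def wMeas (w : ℝ → ℝ) : Measure ℝ := volume.withDensity fun x => ENNReal.ofReal (w x)

lemma len_pos (n : ℤ) : 0 < len n := zpow_pos two_pos _

lemma dI_lt (n k : ℤ) : (k : ℝ) * 2 ^ (-n) < ((k : ℝ) + 1) * 2 ^ (-n) := by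
  have := zpow_pos (two_pos (α := ℝ)) (-n); nlinarith

lemma dI_nonempty (n k : ℤ) : (dI n k).Nonempty :=
  Set.nonempty_Ico.2 (dI_lt n k)

lemma volume_dI (n k : ℤ) : volume (dI n k) = ENNReal.ofReal (len n) := by
  rw [dI, Real.volume_Ico]; congr 1; rw [len]; ring

lemma dI_split (n k : ℤ) :
    dI (n+1) (2*k) ∪ dI (n+1) (2*k+1) = dI n k := by
  have h2 : (2:ℝ) ^ (-(n+1)) = 2 ^ (-n) / 2 := by
    rw [neg_add, zpow_add₀ (two_ne_zero), zpow_neg_one]; ring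
  have e1 : ((2*k : ℤ) : ℝ) * 2 ^ (-(n+1)) = (k : ℝ) * 2 ^ (-n) := by push_cast; rw [h2]; ring
  have e2 : (((2*k : ℤ) : ℝ) + 1) * 2 ^ (-(n+1)) = ((2*k+1 : ℤ) : ℝ) * 2 ^ (-(n+1)) := by push_cast; ring
  have e3 : (((2*k+1 : ℤ) : ℝ) + 1) * 2 ^ (-(n+1)) = ((k : ℝ) + 1) * 2 ^ (-n) := by push_cast; rw [h2]; ring
  rw [dI, dI, dI, e1, e2, e3]
  exact Set.Ico_union_Ico_eq_Ico (le_of_lt (by rw [← e1, ← e2]; exact dI_lt (n+1) (2*k)))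
    (le_of_lt (by rw [← e3]; exact dI_lt (n+1) (2*k+1)))

lemma dI_disjoint_halves (n k : ℤ) : Disjoint (dI (n+1) (2*k)) (dI (n+1) (2*k+1)) := by
  have e2 : (((2*k : ℤ) : ℝ) + 1) * 2 ^ (-(n+1)) = ((2*k+1 : ℤ) : ℝ) * 2 ^ (-(n+1)) := by push_cast; ring
  rw [dI, dI, e2]
  exact Set.Ico_disjoint_Ico_same

lemma integrableOn_dI {w : ℝ → ℝ} (hw : LocallyIntegrable w volume) (n k : ℤ) :
    IntegrableOn w (dI n k) volume := by
  have := hw.integrableOn_isCompact (isCompact_Icc (a := (k : ℝ) * 2 ^ (-n)) (b := ((k : ℝ) + 1) * 2 ^ (-n)))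
  exact this.mono_set Set.Ico_subset_Icc_self

lemma avg_pos {w : ℝ → ℝ} (hpos : ∀ x, 0 < w x) (hw : LocallyIntegrable w volume) (n k : ℤ) :
    0 < avg w n k := by
  have h : 0 < ∫ x in dI n k, w x := by
    rw [setIntegral_pos_iff_support_of_nonneg_ae (ae_of_all _ (fun x => (hpos x).le)) (integrableOn_dI hw n k)]
    have : Function.support w ∩ dI n k = dI n k := by
      apply Set.inter_eq_self_of_subset_right
      intro x _; exact (hpos x).ne'
    rw [this, volume_dI]
    simp [len_pos n]
  exact mul_pos (zpow_pos two_pos _) h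

lemma avg_avg {w : ℝ → ℝ} (hw : LocallyIntegrable w volume) (n k : ℤ) :
    avg w n k = (avgL w n k + avgR w n k) / 2 := by
  have hint : ∫ x in dI n k, w x = (∫ x in dI (n+1) (2*k), w x) + ∫ x in dI (n+1) (2*k+1), w x := by
    rw [← dI_split n k]
    exact setIntegral_union (dI_disjoint_halves n k) measurableSet_Ico
      (integrableOn_dI hw _ _) (integrableOn_dI hw _ _)
  have h2 : (2:ℝ) ^ (n+1) = 2 ^ n * 2 := by rw [zpow_add₀ (two_ne_zero : (2:ℝ) ≠ 0)]; ring
  rw [avg, avgL, avgR, avg, avg, hint, h2]; ring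

lemma one_le_avg_mul {w : ℝ → ℝ} (hpos : ∀ x, 0 < w x) (hw : LocallyIntegrable w volume)
    (hw' : LocallyIntegrable (inv' w) volume) (n k : ℤ) :
    1 ≤ avg w n k * avg (inv' w) n k := by
  set A := ∫ x in dI n k, w x with hA
  set B := ∫ x in dI n k, inv' w x with hB
  have hApos : 0 < A := by
    have := avg_pos hpos hw n k; rw [avg] at this
    nlinarith [zpow_pos (two_pos (α := ℝ)) n]
  have hBpos : 0 < B := by
    have := avg_pos (w := inv' w) (fun x => inv_pos.2 (hpos x)) hw' n k; rw [avg] at this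
    nlinarith [zpow_pos (two_pos (α := ℝ)) n]
  set t := Real.sqrt (B / A) with ht
  have htpos : 0 < t := Real.sqrt_pos.2 (div_pos hBpos hApos)
  have ht2 : t ^ 2 * A = B := by
    rw [ht, Real.sq_sqrt (div_pos hBpos hApos).le]; field_simp
  have hpt : ∀ x ∈ dI n k, (2:ℝ) ≤ t * w x + (inv' w) x / t := by
    intro x _
    have hwx := hpos x
    have key : 0 ≤ (Real.sqrt (t * w x) - Real.sqrt ((inv' w) x / t))^2 := sq_nonneg _
    have e1 : Real.sqrt (t * w x) ^ 2 = t * w x := Real.sq_sqrt (by positivity)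
    have e2 : Real.sqrt ((inv' w) x / t) ^ 2 = (inv' w) x / t := Real.sq_sqrt (by
      have : 0 < (inv' w) x := inv_pos.2 hwx
      positivity)
    have e3 : Real.sqrt (t * w x) * Real.sqrt ((inv' w) x / t) = 1 := by
      rw [← Real.sqrt_mul (by positivity)]
      have : t * w x * ((inv' w) x / t) = 1 := by
        simp only [inv']; field_simp; try ring
      rw [this, Real.sqrt_one]
    nlinarith [key, e1, e2, e3]
  have hmeas : MeasurableSet (dI n k) := measurableSet_Ico
  have hvol : volume (dI n k) < ⊤ := by rw [volume_dI]; exact ENNReal.ofReal_lt_top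
  have hig : IntegrableOn (fun x => t * w x + (inv' w) x / t) (dI n k) volume :=
    ((integrableOn_dI hw n k).const_mul t).add ((integrableOn_dI hw' n k).div_const t)
  have hint : ∫ x in dI n k, (2:ℝ) ≤ ∫ x in dI n k, (t * w x + (inv' w) x / t) :=
    setIntegral_mono_on (integrableOn_const hvol.ne) hig hmeas hpt
  have hconst : ∫ x in dI n k, (2:ℝ) = 2 * len n := by
    rw [setIntegral_const, measureReal_def, volume_dI, ENNReal.toReal_ofReal (len_pos n).le, smul_eq_mul]; ring
  have hsum : ∫ x in dI n k, (t * w x + (inv' w) x / t) = t * A + B / t := by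
    rw [integral_add ((integrableOn_dI hw n k).const_mul t) ((integrableOn_dI hw' n k).div_const t),
      integral_const_mul, integral_div]
  have hlen : len n ≤ t * A := by
    have hBt : B / t = t * A := by
      rw [← ht2]; field_simp
    rw [hconst, hsum, hBt] at hint; linarith
  have hAB : (len n) ^ 2 ≤ A * B := by
    have h := mul_le_mul hlen hlen (len_pos n).le (by positivity : (0:ℝ) ≤ t * A)
    nlinarith [ht2]
  have h2n : (2:ℝ) ^ (n:ℤ) * len n = 1 := by
    rw [len, ← zpow_add₀ (two_ne_zero : (2:ℝ) ≠ 0)]; simp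
  rw [avg, avg, ← hA, ← hB]
  calc (1:ℝ) = ((2:ℝ) ^ (n:ℤ) * len n) ^ 2 := by rw [h2n]; ring
    _ ≤ (2:ℝ) ^ (n:ℤ) * A * ((2:ℝ)^(n:ℤ) * B) := by
        have h2p : (0:ℝ) ≤ ((2:ℝ) ^ (n:ℤ))^2 := sq_nonneg _
        have h := mul_le_mul_of_nonneg_left hAB h2p
        nlinarith [h]

lemma dI_subset_iff {m l n k : ℤ} :
    dI m l ⊆ dI n k ↔ ((k:ℝ) * 2 ^ (-n) ≤ (l:ℝ) * 2 ^ (-m) ∧ ((l:ℝ)+1) * 2 ^ (-m) ≤ ((k:ℝ)+1) * 2 ^ (-n)) := by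
  rw [dI, dI, Set.Ico_subset_Ico_iff (dI_lt m l)]

lemma le_gen_of_subset {m l n k : ℤ} (h : dI m l ⊆ dI n k) : n ≤ m := by
  rw [dI_subset_iff] at h
  have h3 : (2:ℝ) ^ (-m) ≤ 2 ^ (-n) := by nlinarith [h.1, h.2]
  have := (zpow_le_zpow_iff_right₀ (one_lt_two (α := ℝ))).1 h3
  omega

lemma eq_of_subset_same_gen {l n k : ℤ} (h : dI n l ⊆ dI n k) : l = k := by
  rw [dI_subset_iff] at h
  have hp := zpow_pos (two_pos (α := ℝ)) (-n)
  have h1 : (k:ℝ) ≤ l := by nlinarith [h.1]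
  have h2 : (l:ℝ) ≤ k := by nlinarith [h.2]
  have : (l:ℝ) = k := le_antisymm h2 h1
  exact_mod_cast this

lemma subset_half_of_subset {m l n k : ℤ} (h : dI m l ⊆ dI n k) (hm : n + 1 ≤ m) :
    dI m l ⊆ dI (n+1) (2*k) ∨ dI m l ⊆ dI (n+1) (2*k+1) := by
  rw [dI_subset_iff] at h
  obtain ⟨h1, h2⟩ := h
  set j : ℕ := (m - n - 1).toNat with hj
  have hjj : (j : ℤ) = m - n - 1 := Int.toNat_of_nonneg (by omega)
  have hpow : (2:ℝ) ^ (-(n+1)) = 2 ^ ((j:ℤ)) * 2 ^ (-m) := by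
    rw [← zpow_add₀ (two_ne_zero : (2:ℝ) ≠ 0)]
    congr 1; omega
  have hpm := zpow_pos (two_pos (α := ℝ)) (-m)
  have hcast : ((2:ℝ)) ^ ((j:ℤ)) = (((2^j : ℤ) : ℝ)) := by
    push_cast; rw [zpow_natCast]
  -- integer inequalities
  have hi1 : (2*k) * 2^j ≤ l := by
    have : ((2*k) * 2^j : ℤ) * ((2:ℝ) ^ (-m)) ≤ (l:ℝ) * 2 ^ (-m) := by
      calc ((2*k) * 2^j : ℤ) * ((2:ℝ) ^ (-m)) = (k:ℝ) * (2 ^ ((j:ℤ)+1) * 2 ^ (-m)) := by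
            push_cast; rw [zpow_add₀ (two_ne_zero : (2:ℝ) ≠ 0), zpow_natCast]; ring
        _ = (k:ℝ) * 2 ^ (-n) := by
            rw [← zpow_add₀ (two_ne_zero : (2:ℝ) ≠ 0)]; congr 2; omega
        _ ≤ (l:ℝ) * 2 ^ (-m) := h1
    have := (mul_le_mul_iff_of_pos_right hpm).1 this
    exact_mod_cast this
  have hi2 : l + 1 ≤ (2*k+2) * 2^j := by
    have : ((l:ℝ)+1) * 2 ^ (-m) ≤ ((2*k+2) * 2^j : ℤ) * ((2:ℝ) ^ (-m)) := by
      calc ((l:ℝ)+1) * 2 ^ (-m) ≤ ((k:ℝ)+1) * 2 ^ (-n) := h2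
        _ = ((2*k+2) * 2^j : ℤ) * ((2:ℝ) ^ (-m)) := by
            push_cast
            rw [show (-n : ℤ) = ((j:ℤ)+1) + (-m) by omega, zpow_add₀ (two_ne_zero : (2:ℝ) ≠ 0),
              zpow_add₀ (two_ne_zero : (2:ℝ) ≠ 0), zpow_natCast]
            ring
    have := (mul_le_mul_iff_of_pos_right hpm).1 this
    exact_mod_cast this
  have key : l + 1 ≤ (2*k+1) * 2^j ∨ (2*k+1) * 2^j ≤ l := by omega
  have hpow2 : ∀ (c : ℤ), ((c:ℝ)) * 2 ^ (-(n+1)) = ((c * 2^j : ℤ) : ℝ) * 2 ^ (-m) := by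
    intro c; rw [hpow]; push_cast; rw [zpow_natCast]; ring
  rcases key with hc | hc
  · left
    rw [dI_subset_iff]
    constructor
    · rw [show ((2*k : ℤ):ℝ) = ((2*k:ℤ):ℝ) by ring, hpow2 (2*k)]
      have : ((2*k * 2^j : ℤ):ℝ) ≤ (l:ℝ) := by exact_mod_cast hi1
      nlinarith [hpm]
    · rw [show ((2*k : ℤ):ℝ) + 1 = ((2*k+1:ℤ):ℝ) by push_cast; ring, hpow2 (2*k+1)]
      have : ((l:ℝ)+1) ≤ ((2*k+1) * 2^j : ℤ) := by exact_mod_cast hc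
      nlinarith [hpm]
  · right
    rw [dI_subset_iff]
    constructor
    · rw [show ((2*k+1 : ℤ):ℝ) = ((2*k+1:ℤ):ℝ) by ring, hpow2 (2*k+1)]
      have : ((2*k+1) * 2^j : ℤ) ≤ (l:ℝ) := by exact_mod_cast hc
      nlinarith [hpm]
    · rw [show ((2*k+1 : ℤ):ℝ) + 1 = ((2*k+2:ℤ):ℝ) by push_cast; ring, hpow2 (2*k+2)]
      have : ((l:ℝ)+1) ≤ ((2*k+2) * 2^j : ℤ) := by exact_mod_cast hi2
      nlinarith [hpm]

noncomputable def Bf (Q x y : ℝ) : ℝ := x*(Q - x*y) + 8*Q^2*(x - 1/y)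

lemma Bf_nonneg {Q x y : ℝ} (hx : 0 < x) (hy : 0 < y) (h1 : 1 ≤ x*y) (h2 : x*y ≤ Q) :
    0 ≤ Bf Q x y := by
  have hQ : 1 ≤ Q := le_trans h1 h2
  have h3 : 0 ≤ x - 1/y := by
    rw [sub_nonneg, div_le_iff₀ hy]; linarith
  have h4 : 0 ≤ x*(Q - x*y) := mul_nonneg hx.le (by linarith)
  have h5 : (0:ℝ) ≤ 8*Q^2 := by nlinarith
  have := mul_nonneg h5 h3
  rw [Bf]; linarith

lemma Bf_le {Q x y : ℝ} (hx : 0 < x) (hy : 0 < y) (h1 : 1 ≤ x*y) (h2 : x*y ≤ Q) (hQ2 : Q ≤ 2) :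
    Bf Q x y ≤ 33*(Q-1)*x := by
  have hQ : 1 ≤ Q := le_trans h1 h2
  have hxy : x - 1/y = (x*y-1)/y := by field_simp
  have hstep : (x*y-1)/y ≤ (Q-1)*x := by
    rw [div_le_iff₀ hy]; nlinarith
  have h3 : x - 1/y ≤ (Q-1)*x := by rw [hxy]; exact hstep
  have h3' : 0 ≤ x - 1/y := by
    rw [sub_nonneg, div_le_iff₀ hy]; linarith
  have h4 : x*(Q - x*y) ≤ (Q-1)*x := by nlinarith
  have h8 : 8*Q^2 ≤ 32 := by nlinarith
  have hQx : 0 ≤ (Q-1)*x := mul_nonneg (by linarith) hx.le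
  rw [Bf]
  nlinarith [mul_le_mul h8 h3 h3' (by norm_num : (0:ℝ) ≤ 32)]

lemma bellman {Q u₁ u₂ v₁ v₂ : ℝ} (hu₁ : 0 < u₁) (hu₂ : 0 < u₂) (hv₁ : 0 < v₁) (hv₂ : 0 < v₂)
    (h1 : 1 ≤ u₁*v₁) (h2 : u₁*v₁ ≤ Q) (h3 : 1 ≤ u₂*v₂) (h4 : u₂*v₂ ≤ Q)
    (h5 : ((u₁+u₂)/2) * ((v₁+v₂)/2) ≤ Q) :
    ((u₁-u₂)/2)^2 * ((v₁+v₂)/2) + Bf Q u₁ v₁ + Bf Q u₂ v₂ ≤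
      2 * Bf Q ((u₁+u₂)/2) ((v₁+v₂)/2) := by
  set u := (u₁+u₂)/2 with hu
  set v := (v₁+v₂)/2 with hv
  set a := (u₁-u₂)/2 with ha
  set b := (v₁-v₂)/2 with hb
  have hupos : 0 < u := by rw [hu]; linarith
  have hvpos : 0 < v := by rw [hv]; linarith
  have hQ1 : 1 ≤ Q := le_trans h1 h2
  have h4Q : u^2*(v₁*v₂) ≤ 4*Q^2 := by
    have hv12 : v₁*v₂ ≤ v^2 := by rw [hv]; nlinarith [sq_nonneg (v₁ - v₂)]
    have huv : u*v ≤ Q := h5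
    nlinarith [sq_nonneg u, mul_pos hupos hvpos]
  have hnum : 0 ≤ v₁*v₂*(a*v+2*u*b)^2 + b^2*(16*Q^2 - 4*(u^2*(v₁*v₂))) := by
    nlinarith [mul_nonneg (mul_nonneg hv₁.le hv₂.le) (sq_nonneg (a*v+2*u*b)), sq_nonneg b, h4Q]
  have heq : 2 * Bf Q u v - Bf Q u₁ v₁ - Bf Q u₂ v₂ - a^2*v =
      (v₁*v₂*(a*v+2*u*b)^2 + b^2*(16*Q^2 - 4*(u^2*(v₁*v₂)))) / (v*v₁*v₂) := by
    rw [Bf, Bf, Bf, hu, hv, ha, hb]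
    field_simp
    ring
  have hdiv : 0 ≤ (v₁*v₂*(a*v+2*u*b)^2 + b^2*(16*Q^2 - 4*(u^2*(v₁*v₂)))) / (v*v₁*v₂) :=
    div_nonneg hnum (by positivity)
  linarith [heq ▸ hdiv]


def trm (w : ℝ → ℝ) (n k : ℤ) : ℝ :=
  (avg w n k) ^ 2 * (cI w n k) ^ 2 * avg (inv' w) n k

lemma len_succ (n : ℤ) : len (n+1) = len n / 2 := by
  rw [len, len, neg_add, zpow_add₀ (two_ne_zero : (2:ℝ) ≠ 0), zpow_neg_one]; ring

lemma trm_eq {w : ℝ → ℝ} {n k : ℤ} (hu : avg w n k ≠ 0) :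
    trm w n k = len n * ((avgL w n k - avgR w n k)/2)^2 * avg (inv' w) n k := by
  rw [trm, cI, div_pow, mul_pow, Real.sq_sqrt (len_pos n).le]
  field_simp

lemma trm_nonneg {w : ℝ → ℝ} (hpos : ∀ x, 0 < w x) (hw' : LocallyIntegrable (inv' w) volume)
    (n k : ℤ) : 0 ≤ trm w n k := by
  have := avg_pos (w := inv' w) (fun x => inv_pos.2 (hpos x)) hw' n k
  exact mul_nonneg (mul_nonneg (sq_nonneg _) (sq_nonneg _)) this.le

lemma sum_trm_le {w : ℝ → ℝ} {Q : ℝ} (hpos : ∀ x, 0 < w x) (hw : LocallyIntegrable w volume)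
    (hw' : LocallyIntegrable (inv' w) volume)
    (hQ : ∀ n k : ℤ, avg w n k * avg (inv' w) n k ≤ Q) :
    ∀ M : ℕ, ∀ n k : ℤ, ∀ s : Finset (ℤ × ℤ),
      (∀ p ∈ s, dI p.1 p.2 ⊆ dI n k ∧ p.1 ≤ n + M) →
      ∑ p ∈ s, trm w p.1 p.2 ≤ 2 * len n * Bf Q (avg w n k) (avg (inv' w) n k) := by
  have hpos' : ∀ x, 0 < inv' w x := fun x => inv_pos.2 (hpos x)
  intro M
  induction M with
  | zero =>
      intro n k s hs
      -- every element of s is (n, k)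
      have hsub : s ⊆ {(n,k)} := by
        intro p hp
        obtain ⟨h1, h2⟩ := hs p hp
        have h3 : n ≤ p.1 := le_gen_of_subset h1
        have h4 : p.1 = n := by omega
        rw [Finset.mem_singleton]
        have h5 : p.2 = k := eq_of_subset_same_gen (h4 ▸ h1)
        exact Prod.ext h4 h5
      have hle : ∑ p ∈ s, trm w p.1 p.2 ≤ ∑ p ∈ ({(n,k)} : Finset (ℤ × ℤ)), trm w p.1 p.2 :=
        Finset.sum_le_sum_of_subset_of_nonneg hsub (fun p _ _ => trm_nonneg hpos hw' p.1 p.2)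
      rw [Finset.sum_singleton] at hle
      refine hle.trans ?_
      -- Bellman-type bound for one term
      have hmid := avg_avg hw n k
      have hmid' := avg_avg hw' n k
      rw [avgL, avgR] at hmid hmid'
      have bell := bellman (Q := Q) (avg_pos hpos hw (n+1) (2*k)) (avg_pos hpos hw (n+1) (2*k+1))
        (avg_pos hpos' hw' (n+1) (2*k)) (avg_pos hpos' hw' (n+1) (2*k+1))
        (one_le_avg_mul hpos hw hw' (n+1) (2*k)) (hQ (n+1) (2*k))
        (one_le_avg_mul hpos hw hw' (n+1) (2*k+1)) (hQ (n+1) (2*k+1))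
        (by rw [← hmid, ← hmid']; exact hQ n k)
      rw [trm_eq (avg_pos hpos hw n k).ne']
      rw [avgL, avgR]
      rw [← hmid, ← hmid'] at bell
      have hB1 := Bf_nonneg (Q := Q) (avg_pos hpos hw (n+1) (2*k)) (avg_pos hpos' hw' (n+1) (2*k))
        (one_le_avg_mul hpos hw hw' (n+1) (2*k)) (hQ (n+1) (2*k))
      have hB2 := Bf_nonneg (Q := Q) (avg_pos hpos hw (n+1) (2*k+1)) (avg_pos hpos' hw' (n+1) (2*k+1))
        (one_le_avg_mul hpos hw hw' (n+1) (2*k+1)) (hQ (n+1) (2*k+1))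
      nlinarith [len_pos n, bell, hB1, hB2]
  | succ M ih =>
      intro n k s hs
      classical
      have hmid := avg_avg hw n k
      have hmid' := avg_avg hw' n k
      rw [avgL, avgR] at hmid hmid'
      have bell := bellman (Q := Q) (avg_pos hpos hw (n+1) (2*k)) (avg_pos hpos hw (n+1) (2*k+1))
        (avg_pos hpos' hw' (n+1) (2*k)) (avg_pos hpos' hw' (n+1) (2*k+1))
        (one_le_avg_mul hpos hw hw' (n+1) (2*k)) (hQ (n+1) (2*k))
        (one_le_avg_mul hpos hw hw' (n+1) (2*k+1)) (hQ (n+1) (2*k+1))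
        (by rw [← hmid, ← hmid']; exact hQ n k)
      rw [← hmid, ← hmid'] at bell
      -- split the sum
      set P : ℤ × ℤ → Prop := fun p => p = (n,k) with hP
      set L : ℤ × ℤ → Prop := fun p => dI p.1 p.2 ⊆ dI (n+1) (2*k) with hL
      have hsplit1 := Finset.sum_filter_add_sum_filter_not s P (fun p => trm w p.1 p.2)
      have hsplit2 := Finset.sum_filter_add_sum_filter_not (s.filter (fun p => ¬ P p)) L
        (fun p => trm w p.1 p.2)
      -- the diagonal part
      have hd : ∑ p ∈ s.filter P, trm w p.1 p.2 ≤ trm w n k := by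
        have hsub : s.filter P ⊆ {(n,k)} := by
          intro p hp
          rw [Finset.mem_filter] at hp
          rw [Finset.mem_singleton]; exact hp.2
        have := Finset.sum_le_sum_of_subset_of_nonneg hsub
          (fun p _ _ => trm_nonneg hpos hw' p.1 p.2)
        rwa [Finset.sum_singleton] at this
      -- the left part
      have hleft : ∑ p ∈ (s.filter (fun p => ¬ P p)).filter L, trm w p.1 p.2 ≤
          2 * len (n+1) * Bf Q (avg w (n+1) (2*k)) (avg (inv' w) (n+1) (2*k)) := by
        apply ih (n+1) (2*k)
        intro p hp
        rw [Finset.mem_filter, Finset.mem_filter] at hp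
        refine ⟨hp.2, ?_⟩
        have := (hs p hp.1.1).2
        push_cast at this ⊢
        omega
      -- the right part
      have hright : ∑ p ∈ (s.filter (fun p => ¬ P p)).filter (fun p => ¬ L p), trm w p.1 p.2 ≤
          2 * len (n+1) * Bf Q (avg w (n+1) (2*k+1)) (avg (inv' w) (n+1) (2*k+1)) := by
        apply ih (n+1) (2*k+1)
        intro p hp
        rw [Finset.mem_filter, Finset.mem_filter] at hp
        obtain ⟨⟨hps, hne⟩, hnl⟩ := hp
        obtain ⟨hsub, hlev⟩ := hs p hps
        have h3 : n ≤ p.1 := le_gen_of_subset hsub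
        have h4 : n + 1 ≤ p.1 := by
          rcases eq_or_lt_of_le h3 with h | h
          · exfalso
            have h5 : p.2 = k := eq_of_subset_same_gen (h ▸ hsub)
            exact hne (Prod.ext h.symm h5)
          · omega
        rcases subset_half_of_subset hsub h4 with hc | hc
        · exact absurd hc hnl
        · refine ⟨hc, ?_⟩
          push_cast at hlev ⊢
          omega
      have hB1 := Bf_nonneg (Q := Q) (avg_pos hpos hw (n+1) (2*k)) (avg_pos hpos' hw' (n+1) (2*k))
        (one_le_avg_mul hpos hw hw' (n+1) (2*k)) (hQ (n+1) (2*k))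
      have hB2 := Bf_nonneg (Q := Q) (avg_pos hpos hw (n+1) (2*k+1)) (avg_pos hpos' hw' (n+1) (2*k+1))
        (one_le_avg_mul hpos hw hw' (n+1) (2*k+1)) (hQ (n+1) (2*k+1))
      have htrm : trm w n k = len n * ((avg w (n+1) (2*k) - avg w (n+1) (2*k+1))/2)^2 *
          avg (inv' w) n k := by
        rw [trm_eq (avg_pos hpos hw n k).ne', avgL, avgR]
      rw [len_succ] at hleft hright
      nlinarith [len_pos n, bell, hleft, hright, hd, hsplit1, hsplit2, htrm]


/-- the key Carleson-type estimate of Lemma 2.2, for weights with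
characteristic sufficiently close to 1, with `ε` and `C` independent of the weight. -/
theorem carleson_estimate_near_one :
    ∃ δ₀ > (0 : ℝ), ∃ ε > (0 : ℝ), ∃ C > (0 : ℝ), ∀ w : ℝ → ℝ,
      (∀ x, 0 < w x) → LocallyIntegrable w volume → LocallyIntegrable (inv' w) volume →
      BddAbove (Set.range fun p : ℤ × ℤ => avg w p.1 p.2 * avg (inv' w) p.1 p.2) →
      A2d w ≤ 1 + δ₀ →
      ∀ n k : ℤ, (len n)⁻¹ * ∑' I : {p : ℤ × ℤ // dI p.1 p.2 ⊆ dI n k},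
          (avg w I.1.1 I.1.2) ^ 2 * (cI w I.1.1 I.1.2) ^ 2 * avg (inv' w) I.1.1 I.1.2 ≤
        C * (Real.log (A2d w)) ^ ε * A2d w * avg w n k := by
  refine ⟨1, one_pos, 1, one_pos, 132, by norm_num, ?_⟩
  intro w hpos hw hw' hbdd hA2 n k
  set Q := A2d w with hQdef
  have hQle : ∀ m l : ℤ, avg w m l * avg (inv' w) m l ≤ Q := by
    intro m l
    exact le_ciSup hbdd ((m, l) : ℤ × ℤ)
  have hQ1 : 1 ≤ Q := le_trans (one_le_avg_mul hpos hw hw' 0 0) (hQle 0 0)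
  have hQ2 : Q ≤ 2 := by linarith
  set u := avg w n k with hu
  set v := avg (inv' w) n k with hv
  have hupos : 0 < u := avg_pos hpos hw n k
  have hvpos : 0 < v := avg_pos (fun x => inv_pos.2 (hpos x)) hw' n k
  set c : ℝ := 2 * len n * Bf Q u v with hc
  -- bound all finite subsums
  have hbound : ∀ t : Finset {p : ℤ × ℤ // dI p.1 p.2 ⊆ dI n k},
      ∑ I ∈ t, trm w I.1.1 I.1.2 ≤ c := by
    intro t
    classical
    set s : Finset (ℤ × ℤ) := t.image Subtype.val with hsdef
    set M : ℕ := s.sup (fun p => (p.1 - n).toNat) with hM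
    have hsum : ∑ I ∈ t, trm w I.1.1 I.1.2 = ∑ p ∈ s, trm w p.1 p.2 := by
      rw [hsdef, Finset.sum_image (fun x _ y _ h => Subtype.ext h)]
    rw [hsum]
    apply sum_trm_le hpos hw hw' hQle M n k s
    intro p hp
    refine ⟨?_, ?_⟩
    · rw [hsdef, Finset.mem_image] at hp
      obtain ⟨I, _, hI⟩ := hp
      rw [← hI]; exact I.2
    · have h6 : (p.1 - n).toNat ≤ M := Finset.le_sup (f := fun p : ℤ × ℤ => (p.1 - n).toNat) hp
      omega
  have hnonneg : ∀ I : {p : ℤ × ℤ // dI p.1 p.2 ⊆ dI n k}, 0 ≤ trm w I.1.1 I.1.2 :=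
    fun I => trm_nonneg hpos hw' I.1.1 I.1.2
  have hsummable : Summable (fun I : {p : ℤ × ℤ // dI p.1 p.2 ⊆ dI n k} =>
      trm w I.1.1 I.1.2) := summable_of_sum_le hnonneg hbound
  have htsum : ∑' I : {p : ℤ × ℤ // dI p.1 p.2 ⊆ dI n k}, trm w I.1.1 I.1.2 ≤ c :=
    Summable.tsum_le_of_sum_le hsummable hbound
  have hstep1 : (len n)⁻¹ * (∑' I : {p : ℤ × ℤ // dI p.1 p.2 ⊆ dI n k},
      trm w I.1.1 I.1.2) ≤ 2 * Bf Q u v := by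
    have h1 : (len n)⁻¹ * (∑' I : {p : ℤ × ℤ // dI p.1 p.2 ⊆ dI n k},
        trm w I.1.1 I.1.2) ≤ (len n)⁻¹ * c :=
      mul_le_mul_of_nonneg_left htsum (inv_nonneg.2 (len_pos n).le)
    have h2 : (len n)⁻¹ * c = 2 * Bf Q u v := by
      rw [hc]; field_simp [(len_pos n).ne']
    linarith
  have hBle : Bf Q u v ≤ 33*(Q-1)*u :=
    Bf_le hupos hvpos (one_le_avg_mul hpos hw hw' n k) (hQle n k) hQ2
  have hlog : (Q-1)/2 ≤ Real.log Q := by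
    have h1 := Real.one_sub_inv_le_log_of_pos (by linarith : (0:ℝ) < Q)
    have h2 : Q * Q⁻¹ = 1 := mul_inv_cancel₀ (by linarith)
    nlinarith [h1, h2]
  have hlogpos : 0 ≤ Real.log Q := Real.log_nonneg hQ1
  have hfinal : 2 * Bf Q u v ≤ 132 * Real.log Q * Q * u := by
    nlinarith [mul_le_mul_of_nonneg_right hlog hupos.le,
      mul_nonneg (mul_nonneg hlogpos hupos.le) (sub_nonneg.2 hQ1), hBle]
  have hrw : (Real.log (A2d w)) ^ (1:ℝ) = Real.log Q := by
    rw [← hQdef, Real.rpow_one]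
  calc (len n)⁻¹ * ∑' I : {p : ℤ × ℤ // dI p.1 p.2 ⊆ dI n k},
        (avg w I.1.1 I.1.2) ^ 2 * (cI w I.1.1 I.1.2) ^ 2 * avg (inv' w) I.1.1 I.1.2
      = (len n)⁻¹ * ∑' I : {p : ℤ × ℤ // dI p.1 p.2 ⊆ dI n k}, trm w I.1.1 I.1.2 := rfl
    _ ≤ 2 * Bf Q u v := hstep1
    _ ≤ 132 * Real.log Q * Q * u := hfinal
    _ = 132 * (Real.log (A2d w)) ^ (1:ℝ) * A2d w * avg w n k := by rw [hrw, ← hQdef, hu]
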